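/- arXiv:1401.0399 — 3 statements merged into one kernel-verified Lean document; each statement's English description precedes it below -/
import Mathlib

section
/- Let F : ℝ² → ℝ² be a polynomial map. Then F(Rk) = R F(k) for all R ∈ SO(2) and all k ∈ ℝ² if and only if there exist one-variable real polynomials u and v such that F(k) = u(s(k)) k + v(s(k)) k^⊥ for all k ∈ ℝ². -/
open Matrix


open Polynomial Finset

lemma coeff_C_mul_negX_pow (a : ℝ) (i n : ℕ) :
    (C a * (-X)^i).coeff n = if n = i then (-1)^i * a else 0 := by
  have : C a * (-X : ℝ[X])^i = C ((-1)^i * a) * X^i := by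
    rw [neg_pow]; ring_nf; rw [_root_.map_mul, map_pow, map_neg, _root_.map_one]; ring
  rw [this, coeff_C_mul_X_pow]

lemma sum_range_two_mul (f : ℕ → ℝ) (N : ℕ) :
    ∑ n ∈ range (2*N), f n = ∑ i ∈ range N, (f (2*i) + f (2*i+1)) := by
  induction N with
  | zero => simp
  | succ n ih =>
    rw [Nat.mul_succ, sum_range_succ, sum_range_succ, sum_range_succ, ← ih]
    ring

lemma even_poly (p : Polynomial ℝ) (hp : ∀ t : ℝ, p.eval (-t) = p.eval t) :
    ∃ q : Polynomial ℝ, ∀ t : ℝ, q.eval (t^2) = p.eval t := by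
  have hcomp : p.comp (-X) = p := Polynomial.funext (fun t => by simp [hp t])
  have hodd : ∀ n, Odd n → p.coeff n = 0 := by
    intro n hn
    have h1 : p.comp (-X) = ∑ i ∈ range (p.natDegree + 1), C (p.coeff i) * (-X)^i := by
      rw [Polynomial.comp, eval₂_eq_sum_range]
    have h2 : (p.comp (-X)).coeff n = (-1)^n * p.coeff n := by
      rw [h1, finset_sum_coeff]
      simp only [coeff_C_mul_negX_pow]
      rw [Finset.sum_ite_eq (range (p.natDegree+1)) n (fun i => (-1:ℝ)^i * p.coeff i)]
      rcases le_or_gt n p.natDegree with h | h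
      · rw [if_pos (Finset.mem_range.2 (Nat.lt_succ_of_le h))]
      · rw [if_neg (by simp; omega), coeff_eq_zero_of_natDegree_lt h, mul_zero]
    rw [hcomp] at h2
    rcases hn with ⟨m, hm⟩
    have he : (-1:ℝ)^n = -1 := by subst hm; simp [pow_add, pow_mul]
    rw [he] at h2
    linarith
  refine ⟨∑ i ∈ range (p.natDegree + 1), C (p.coeff (2*i)) * X^i, fun t => ?_⟩
  have hlt : p.natDegree < 2 * (p.natDegree + 1) := by omega
  rw [eval_eq_sum_range' hlt, sum_range_two_mul]
  rw [eval_finset_sum]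
  refine Finset.sum_congr rfl (fun i _ => ?_)
  rw [hodd (2*i+1) ⟨i, by omega⟩]
  simp only [eval_mul, eval_pow, eval_C, eval_X, zero_mul, add_zero, ← pow_mul]


lemma invariant_poly (g : (Fin 2 → ℝ) → ℝ) (Q : MvPolynomial (Fin 2) ℝ)
    (hQ : ∀ k, g k = MvPolynomial.eval k Q)
    (hinv : ∀ a c : ℝ, a^2 + c^2 = 1 → ∀ x y : ℝ,
      g ![a*x - c*y, c*x + a*y] = g ![x, y]) :
    ∃ q : Polynomial ℝ, ∀ x y : ℝ, g ![x, y] = q.eval (x^2 + y^2) := by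
  set p : Polynomial ℝ := MvPolynomial.eval₂ Polynomial.C ![Polynomial.X, 0] Q with hpdef
  have hpe : ∀ t : ℝ, p.eval t = g ![t, 0] := by
    intro t
    have h := MvPolynomial.eval₂_comp_left (Polynomial.evalRingHom t)
      (Polynomial.C : ℝ →+* ℝ[X]) ![Polynomial.X, 0] Q
    have h1 : (Polynomial.evalRingHom t).comp (Polynomial.C : ℝ →+* ℝ[X]) = RingHom.id ℝ := by
      ext r; simp
    have h2 : (⇑(Polynomial.evalRingHom t)) ∘ ![Polynomial.X, (0:ℝ[X])] = ![t, 0] := by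
      funext i; fin_cases i <;> simp
    rw [h1, h2] at h
    rw [hpdef]
    show (Polynomial.evalRingHom t) (MvPolynomial.eval₂ Polynomial.C ![Polynomial.X, 0] Q) = _
    rw [h, hQ]
    rfl
  have hpeven : ∀ t : ℝ, p.eval (-t) = p.eval t := by
    intro t
    have h := hinv (-1) 0 (by norm_num) t 0
    have hv : (![(-1)*t - 0*0, 0*t + (-1)*0] : Fin 2 → ℝ) = ![-t, 0] := by
      funext i; fin_cases i <;> norm_num
    rw [hv] at h
    rw [hpe, hpe, h]
  obtain ⟨q, hq⟩ := even_poly p hpeven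
  refine ⟨q, fun x y => ?_⟩
  rcases eq_or_lt_of_le (by positivity : (0:ℝ) ≤ x^2 + y^2) with h0 | h0
  · have hx : x = 0 := by nlinarith
    have hy : y = 0 := by nlinarith
    rw [hx, hy]
    have : (0:ℝ)^2 + (0:ℝ)^2 = 0^2 := by norm_num
    rw [this, hq 0, hpe]
  · set r := Real.sqrt (x^2 + y^2) with hrdef
    have hr2 : r^2 = x^2 + y^2 := Real.sq_sqrt h0.le
    have hrpos : 0 < r := Real.sqrt_pos.2 h0
    have hac : (x/r)^2 + (y/r)^2 = 1 := by
      field_simp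
      linarith [hr2]
    have h := hinv (x/r) (y/r) hac r 0
    have hv : (![(x/r)*r - (y/r)*0, (y/r)*r + (x/r)*0] : Fin 2 → ℝ) = ![x, y] := by
      funext i; fin_cases i <;> simp [hrpos.ne'] <;> field_simp
    rw [hv] at h
    rw [h, ← hpe, ← hq, hr2]

lemma rot_equiv_pointwise (F : (Fin 2 → ℝ) → (Fin 2 → ℝ))
    (hR : ∀ R : Matrix (Fin 2) (Fin 2) ℝ, Rᵀ * R = 1 → R.det = 1 →
      ∀ k : Fin 2 → ℝ, F (R.mulVec k) = R.mulVec (F k)) :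
    ∀ a c : ℝ, a^2 + c^2 = 1 → ∀ x y : ℝ,
      F ![a*x - c*y, c*x + a*y]
        = ![a * F ![x,y] 0 - c * F ![x,y] 1, c * F ![x,y] 0 + a * F ![x,y] 1] := by
  intro a c hac x y
  set R : Matrix (Fin 2) (Fin 2) ℝ := !![a, -c; c, a] with hRdef
  have h1 : Rᵀ * R = 1 := by
    ext i j; fin_cases i <;> fin_cases j <;>
      simp [hRdef, Matrix.mul_apply, Fin.sum_univ_two, Matrix.one_apply, Matrix.transpose_apply, Matrix.vecHead, Matrix.vecTail] <;> nlinarith [hac]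
  have h2 : R.det = 1 := by
    simp [hRdef, Matrix.det_fin_two_of]; nlinarith [hac]
  have hmv : ∀ w : Fin 2 → ℝ, R.mulVec w = ![a * w 0 - c * w 1, c * w 0 + a * w 1] := by
    intro w; funext i; fin_cases i <;>
      simp [hRdef, Matrix.mulVec, dotProduct, Fin.sum_univ_two] <;> ring
  have h3 := hR R h1 h2 ![x, y]
  rw [hmv, hmv] at h3
  simpa using h3


/-- The squared norm `s(k) = k_x² + k_y²`. -/
def sq2 (k : Fin 2 → ℝ) : ℝ := k 0 ^ 2 + k 1 ^ 2

/-- The perpendicular vector `k^⊥ = (k_y, −k_x)`. -/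
def perp2 (k : Fin 2 → ℝ) : Fin 2 → ℝ := ![k 1, -k 0]

/-- a polynomial vector field `F : ℝ² → ℝ²` is equivariant under all
rotations iff `F(k) = u(s(k)) k + v(s(k)) k^⊥` for one-variable polynomials `u, v`. -/
theorem rotation_equivariant_vector_field_2d (F : (Fin 2 → ℝ) → (Fin 2 → ℝ))
    (hF : ∃ P : Fin 2 → MvPolynomial (Fin 2) ℝ,
      ∀ (k : Fin 2 → ℝ) (i : Fin 2), F k i = MvPolynomial.eval k (P i)) :
    (∀ R : Matrix (Fin 2) (Fin 2) ℝ, Rᵀ * R = 1 → R.det = 1 →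
      ∀ k : Fin 2 → ℝ, F (R.mulVec k) = R.mulVec (F k))
    ↔ ∃ u v : Polynomial ℝ, ∀ (k : Fin 2 → ℝ) (i : Fin 2),
        F k i = Polynomial.eval (sq2 k) u * k i + Polynomial.eval (sq2 k) v * perp2 k i := by
  obtain ⟨P, hP⟩ := hF
  constructor
  · intro hR
    have hE := rot_equiv_pointwise F hR
    -- invariant scalar functions
    obtain ⟨qa, hqa⟩ := invariant_poly (fun k => F k 0 * k 0 + F k 1 * k 1)
      (P 0 * MvPolynomial.X 0 + P 1 * MvPolynomial.X 1)
      (by intro k; simp [hP])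
      (by
        intro a c hac x y
        rw [hE a c hac x y]
        simp
        linear_combination (F ![x, y] 0 * x + F ![x, y] 1 * y) * hac)
    obtain ⟨qb, hqb⟩ := invariant_poly (fun k => F k 0 * k 1 - F k 1 * k 0)
      (P 0 * MvPolynomial.X 1 - P 1 * MvPolynomial.X 0)
      (by intro k; simp [hP])
      (by
        intro a c hac x y
        rw [hE a c hac x y]
        simp
        linear_combination (F ![x, y] 0 * y - F ![x, y] 1 * x) * hac)
    -- (beta reduced already)
    -- F vanishes at the origin
    have hF0 : ∀ i, F ![(0:ℝ), 0] i = 0 := by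
      have h := hE (-1) 0 (by norm_num) 0 0
      have hv : (![(-1)*(0:ℝ) - 0*0, 0*0 + (-1)*0] : Fin 2 → ℝ) = ![0, 0] := by
        funext i; fin_cases i <;> norm_num
      rw [hv] at h
      have h0 : F ![(0:ℝ), 0] 0 = 0 := by have := congrFun h 0; simp at this; linarith
      have h1 : F ![(0:ℝ), 0] 1 = 0 := by have := congrFun h 1; simp at this; linarith
      intro i
      fin_cases i
      · exact h0
      · exact h1
    -- qa, qb vanish at 0
    have hqa0 : qa.eval 0 = 0 := by
      have := hqa 0 0; simp [hF0] at this; linarith [this]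
    have hqb0 : qb.eval 0 = 0 := by
      have := hqb 0 0; simp [hF0] at this; linarith [this]
    have hqaX : qa = Polynomial.X * qa.divX := by
      conv_lhs => rw [← Polynomial.X_mul_divX_add qa]
      rw [Polynomial.coeff_zero_eq_eval_zero, hqa0, map_zero, add_zero]
    have hqbX : qb = Polynomial.X * qb.divX := by
      conv_lhs => rw [← Polynomial.X_mul_divX_add qb]
      rw [Polynomial.coeff_zero_eq_eval_zero, hqb0, map_zero, add_zero]
    refine ⟨qa.divX, qb.divX, fun k i => ?_⟩
    have hk : (![k 0, k 1] : Fin 2 → ℝ) = k := by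
      funext j; fin_cases j <;> simp
    rcases eq_or_ne (k 0 ^ 2 + k 1 ^ 2) 0 with hs | hs
    · have h0 : k 0 = 0 := by
        have : k 0 ^ 2 = 0 := by nlinarith [sq_nonneg (k 1)]
        exact pow_eq_zero_iff (by norm_num) |>.1 this
      have h1 : k 1 = 0 := by
        have : k 1 ^ 2 = 0 := by nlinarith [sq_nonneg (k 0)]
        exact pow_eq_zero_iff (by norm_num) |>.1 this
      have hk0 : k = ![(0:ℝ), 0] := by funext j; fin_cases j <;> simp [h0, h1]
      rw [hk0]
      fin_cases i <;> simp [sq2, perp2, hF0]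
    · have ha := hqa (k 0) (k 1)
      have hb := hqb (k 0) (k 1)
      rw [hk] at ha hb
      have heva : qa.eval (k 0 ^ 2 + k 1 ^ 2)
          = (k 0 ^ 2 + k 1 ^ 2) * (qa.divX.eval (k 0 ^ 2 + k 1 ^ 2)) := by
        conv_lhs => rw [hqaX]
        simp
      have hevb : qb.eval (k 0 ^ 2 + k 1 ^ 2)
          = (k 0 ^ 2 + k 1 ^ 2) * (qb.divX.eval (k 0 ^ 2 + k 1 ^ 2)) := by
        conv_lhs => rw [hqbX]
        simp
      rw [heva] at ha
      rw [hevb] at hb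
      have hsq : sq2 k = k 0 ^ 2 + k 1 ^ 2 := rfl
      fin_cases i
      · have key : (k 0 ^ 2 + k 1 ^ 2) * F k 0
            = (k 0 ^ 2 + k 1 ^ 2) * (qa.divX.eval (k 0 ^ 2 + k 1 ^ 2) * k 0
              + qb.divX.eval (k 0 ^ 2 + k 1 ^ 2) * k 1) := by
          linear_combination k 0 * ha + k 1 * hb
        have := mul_left_cancel₀ hs key
        simpa [sq2, perp2] using this
      · have key : (k 0 ^ 2 + k 1 ^ 2) * F k 1
            = (k 0 ^ 2 + k 1 ^ 2) * (qa.divX.eval (k 0 ^ 2 + k 1 ^ 2) * k 1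
              + qb.divX.eval (k 0 ^ 2 + k 1 ^ 2) * (-(k 0))) := by
          linear_combination k 1 * ha - k 0 * hb
        have := mul_left_cancel₀ hs key
        simpa [sq2, perp2] using this
  · rintro ⟨u, v, huv⟩ R hRt hdet k
    have e00 : R 0 0 * R 0 0 + R 1 0 * R 1 0 = 1 := by
      have := congrFun (congrFun hRt 0) 0
      simpa [Matrix.mul_apply, Fin.sum_univ_two, Matrix.one_apply] using this
    have e01 : R 0 0 * R 0 1 + R 1 0 * R 1 1 = 0 := by
      have := congrFun (congrFun hRt 0) 1
      simpa [Matrix.mul_apply, Fin.sum_univ_two, Matrix.one_apply] using this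
    have e11 : R 0 1 * R 0 1 + R 1 1 * R 1 1 = 1 := by
      have := congrFun (congrFun hRt 1) 1
      simpa [Matrix.mul_apply, Fin.sum_univ_two, Matrix.one_apply] using this
    have hdet' : R 0 0 * R 1 1 - R 0 1 * R 1 0 = 1 := by
      rw [Matrix.det_fin_two] at hdet; linarith
    have hsq0 : (R 0 0 - R 1 1)^2 + (R 0 1 + R 1 0)^2 = 0 := by nlinarith
    have hda : R 1 1 = R 0 0 := by nlinarith [sq_nonneg (R 0 0 - R 1 1), sq_nonneg (R 0 1 + R 1 0)]
    have hbc : R 0 1 = - R 1 0 := by nlinarith [sq_nonneg (R 0 0 - R 1 1), sq_nonneg (R 0 1 + R 1 0)]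
    have hmv : ∀ w : Fin 2 → ℝ, R.mulVec w = ![R 0 0 * w 0 + R 0 1 * w 1, R 1 0 * w 0 + R 1 1 * w 1] := by
      intro w; funext j; fin_cases j <;>
        simp [Matrix.mulVec, dotProduct, Fin.sum_univ_two]
    have hs : sq2 (R.mulVec k) = sq2 k := by
      rw [hmv]
      simp only [sq2, Matrix.cons_val_zero, Matrix.cons_val_one, Matrix.head_cons]
      rw [hda, hbc]
      linear_combination (k 0 ^ 2 + k 1 ^ 2) * e00
    funext i
    rw [huv (R.mulVec k) i, hs]
    fin_cases i <;>
      simp only [hmv, perp2, huv k 0, huv k 1, Matrix.cons_val_zero, Matrix.cons_val_one,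
        Matrix.head_cons, perp2] <;>
      rw [hda, hbc] <;> simp [perp2, sq2] <;> ring
end

section
/- Let Q : ℝ² → M₂(ℝ) be a polynomial map (each matrix entry a real polynomial in k_x, k_y). Then Q(Rk) = R Q(k) Rᵀ for all R ∈ SO(2) and all k ∈ ℝ² if and only if there exist one-variable real polynomials m, z, n, h such that Q(k) = m(s(k)) I₂ + z(s(k)) k kᵀ + n(s(k)) J₀ + h(s(k)) k (k^⊥)ᵀ for all k ∈ ℝ². -/
open Matrix

/-- The matrix `J₀` with rows `(0, 1)` and `(−1, 0)`, so that `J₀ k = k^⊥`. -/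
def J0mat : Matrix (Fin 2) (Fin 2) ℝ := !![0, 1; -1, 0]

section
open Polynomial
theorem coeff_comp_negX (p : Polynomial ℝ) (n : ℕ) : (p.comp (-X)).coeff n = (-1)^n * p.coeff n := by
  induction p using Polynomial.induction_on' with
  | add p q hp hq => simp [add_comp, hp, hq, mul_add]
  | monomial k a =>
    rw [← C_mul_X_pow_eq_monomial]
    simp only [mul_comp, C_comp, pow_comp, X_comp]
    rw [show (-X : Polynomial ℝ) = C (-1) * X by simp, mul_pow, ← C_pow, ← mul_assoc, ← C_mul]
    simp only [coeff_C_mul, coeff_X_pow, Polynomial.coeff_monomial]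
    split
    · next h => subst h; ring
    · next h => simp [Ne.symm h]

theorem sum_range_even_odd (f : ℕ → ℝ) (K : ℕ) :
    ∑ m ∈ Finset.range (2*K), f m = ∑ n ∈ Finset.range K, (f (2*n) + f (2*n+1)) := by
  induction K with
  | zero => simp
  | succ K ih =>
    rw [Finset.sum_range_succ, ← ih, Nat.mul_succ]
    rw [show 2*K+2 = (2*K+1)+1 by ring, Finset.sum_range_succ, Finset.sum_range_succ]
    ring

theorem even_poly_s4 (p : Polynomial ℝ) (h : ∀ r : ℝ, p.eval (-r) = p.eval r) :
    ∃ g : Polynomial ℝ, ∀ r : ℝ, p.eval r = g.eval (r^2) := by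
  have hcomp : p.comp (-X) = p := by
    apply Polynomial.funext
    intro r
    simp [eval_comp, h]
  have hodd : ∀ n, p.coeff (2*n+1) = 0 := by
    intro n
    have := coeff_comp_negX p (2*n+1)
    rw [hcomp] at this
    have h2 : ((-1:ℝ))^(2*n+1) = -1 := by
      rw [pow_succ, pow_mul]; simp
    rw [h2] at this
    linarith
  refine ⟨∑ n ∈ Finset.range (p.natDegree + 1), C (p.coeff (2*n)) * X^n, fun r => ?_⟩
  rw [Polynomial.eval_finset_sum]
  simp only [eval_mul, eval_C, eval_pow, eval_X]
  have := Polynomial.eval_eq_sum_range' (show p.natDegree < 2*(p.natDegree+1) by omega) r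
  rw [this, sum_range_even_odd]
  apply Finset.sum_congr rfl
  intro n _
  rw [hodd n]
  ring_nf

theorem eval_axis (p : MvPolynomial (Fin 2) ℝ) (r : ℝ) :
    Polynomial.eval r (MvPolynomial.aeval ![Polynomial.X, 0] p) = MvPolynomial.eval ![r, 0] p := by
  have h1 : Polynomial.eval r (MvPolynomial.aeval ![Polynomial.X, 0] p)
      = Polynomial.aeval (R := ℝ) r (MvPolynomial.aeval ![Polynomial.X, 0] p) := by
    rw [← Polynomial.coe_aeval_eq_eval]
  rw [h1, ← AlgHom.comp_apply, MvPolynomial.comp_aeval]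
  have : (fun i => Polynomial.aeval (R := ℝ) r ((![Polynomial.X, 0] : Fin 2 → Polynomial ℝ) i)) = ![r, 0] := by
    funext i; fin_cases i <;> simp
  rw [this, ← MvPolynomial.coe_aeval_eq_eval]
  rfl


end
theorem rot_structure (R : Matrix (Fin 2) (Fin 2) ℝ) (hR : Rᵀ * R = 1) (hd : R.det = 1) :
    R 1 1 = R 0 0 ∧ R 1 0 = -(R 0 1) ∧ (R 0 0)^2 + (R 0 1)^2 = 1 := by
  have h00 := congrFun (congrFun hR 0) 0
  have h01 := congrFun (congrFun hR 0) 1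
  have h11 := congrFun (congrFun hR 1) 1
  simp [Matrix.mul_apply, Fin.sum_univ_two, Matrix.one_apply] at h00 h01 h11
  rw [Matrix.det_fin_two] at hd
  set a := R 0 0; set b := R 0 1; set c := R 1 0; set d := R 1 1
  have hc : c = -b := by linear_combination d*h01 - b*hd - c*h11
  have hda : d = a := by linear_combination a*hd + c*h01 - d*h00
  refine ⟨hda, hc, ?_⟩
  rw [hc] at h00; linarith


/-- a polynomial matrix field `Q : ℝ² → M₂(ℝ)` satisfies
`Q(Rk) = R Q(k) Rᵀ` for all rotations `R` iff
`Q(k) = m(s) I₂ + z(s) k kᵀ + n(s) J₀ + h(s) k (k^⊥)ᵀ` with `s = s(k)`. -/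
theorem rotation_equivariant_matrix_field_2d (Q : (Fin 2 → ℝ) → Matrix (Fin 2) (Fin 2) ℝ)
    (hQ : ∃ P : Matrix (Fin 2) (Fin 2) (MvPolynomial (Fin 2) ℝ),
      ∀ (k : Fin 2 → ℝ) (i j : Fin 2), Q k i j = MvPolynomial.eval k (P i j)) :
    (∀ R : Matrix (Fin 2) (Fin 2) ℝ, Rᵀ * R = 1 → R.det = 1 →
      ∀ k : Fin 2 → ℝ, Q (R.mulVec k) = R * Q k * Rᵀ)
    ↔ ∃ m z n h : Polynomial ℝ, ∀ (k : Fin 2 → ℝ) (i j : Fin 2),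
        Q k i j = Polynomial.eval (sq2 k) m * (1 : Matrix (Fin 2) (Fin 2) ℝ) i j
          + Polynomial.eval (sq2 k) z * (k i * k j)
          + Polynomial.eval (sq2 k) n * J0mat i j
          + Polynomial.eval (sq2 k) h * (k i * perp2 k j) := by
  constructor
  · intro hequiv
    open Polynomial in
    obtain ⟨P, hP⟩ := hQ
    -- restriction of entries to the positive x-axis
    set φ : Fin 2 → Fin 2 → Polynomial ℝ := fun i j => MvPolynomial.aeval ![Polynomial.X, 0] (P i j) with hφ
    have hφeval : ∀ (i j : Fin 2) (r : ℝ), (φ i j).eval r = Q ![r, 0] i j := by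
      intro i j r
      rw [hP]; exact eval_axis _ r
    -- Q is even
    have hneg : ∀ (k : Fin 2 → ℝ) (i j : Fin 2), Q (fun a => -(k a)) i j = Q k i j := by
      intro k i j
      have h1 : ((-1 : Matrix (Fin 2) (Fin 2) ℝ))ᵀ * (-1) = 1 := by
        simp
      have h2 : (-1 : Matrix (Fin 2) (Fin 2) ℝ).det = 1 := by
        simp [Matrix.det_neg]
      have h3 := hequiv (-1) h1 h2 k
      have h4 : (-1 : Matrix (Fin 2) (Fin 2) ℝ).mulVec k = fun a => -(k a) := by
        funext a; simp [Matrix.neg_mulVec]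
      rw [h4] at h3
      rw [h3]
      simp [Matrix.mul_apply, Fin.sum_univ_two, Matrix.one_apply]
    have hφeven : ∀ (i j : Fin 2) (r : ℝ), (φ i j).eval (-r) = (φ i j).eval r := by
      intro i j r
      rw [hφeval, hφeval]
      have : (![-r, 0] : Fin 2 → ℝ) = fun a => -((![r,0] : Fin 2 → ℝ) a) := by
        funext a; fin_cases a <;> simp
      rw [this, hneg]
    -- the rotation by π/2 and values at 0
    have hpi2 : Q ![0,0] 0 0 = Q ![0,0] 1 1 ∧ Q ![0,0] 0 1 = -(Q ![0,0] 1 0) := by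
      have h1 : (!![0,-1;1,0] : Matrix (Fin 2) (Fin 2) ℝ)ᵀ * !![0,-1;1,0] = 1 := by
        rw [show (!![0,-1;1,0] : Matrix (Fin 2) (Fin 2) ℝ)ᵀ = !![0,1;-1,0] from
          (Matrix.transposeᵣ_eq _).symm]
        norm_num [Matrix.mul_fin_two, ← Matrix.one_fin_two]
      have h2 : (!![0,-1;1,0] : Matrix (Fin 2) (Fin 2) ℝ).det = 1 := by
        simp [Matrix.det_fin_two_of]
      have h3 := hequiv _ h1 h2 ![0,0]
      have h4 : (!![0,-1;1,0] : Matrix (Fin 2) (Fin 2) ℝ).mulVec ![0,0] = ![0,0] := by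
        funext a; fin_cases a <;> simp [Matrix.mulVec, dotProduct, Fin.sum_univ_two]
      rw [h4, show (!![0,-1;1,0] : Matrix (Fin 2) (Fin 2) ℝ)ᵀ = !![0,1;-1,0] from
          (Matrix.transposeᵣ_eq _).symm] at h3
      constructor
      · have := congrFun (congrFun h3 0) 0
        simp [Matrix.mul_apply, Matrix.vecMul, dotProduct, Fin.sum_univ_two] at this
        linarith
      · have := congrFun (congrFun h3 0) 1
        simp [Matrix.mul_apply, Matrix.vecMul, dotProduct, Fin.sum_univ_two] at this
        linarith
    -- even one-variable polynomials for the four combinations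
    obtain ⟨gA, hgA⟩ := even_poly_s4 (φ 0 0 + φ 1 1) (fun r => by simp [hφeven])
    obtain ⟨gB, hgB⟩ := even_poly_s4 (φ 0 1 - φ 1 0) (fun r => by simp [hφeven])
    obtain ⟨gC, hgC⟩ := even_poly_s4 (φ 0 0 - φ 1 1) (fun r => by simp [hφeven])
    obtain ⟨gD, hgD⟩ := even_poly_s4 (φ 0 1 + φ 1 0) (fun r => by simp [hφeven])
    -- gC, gD vanish at 0
    have hgC0 : gC.eval 0 = 0 := by
      have h1 := hgC 0
      simp [hφeval] at h1
      rw [← h1]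
      simp [hpi2.1]
    have hgD0 : gD.eval 0 = 0 := by
      have h1 := hgD 0
      simp [hφeval] at h1
      rw [← h1]
      simp [hpi2.2]
    set zt := gC.divX with hzt
    set wt := gD.divX with hwt
    have hXz : Polynomial.X * zt = gC := by
      have h1 := Polynomial.X_mul_divX_add (p := gC)
      rw [Polynomial.coeff_zero_eq_eval_zero, hgC0] at h1
      simpa using h1
    have hXw : Polynomial.X * wt = gD := by
      have h1 := Polynomial.X_mul_divX_add (p := gD)
      rw [Polynomial.coeff_zero_eq_eval_zero, hgD0] at h1
      simpa using h1
    -- the key pointwise identities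
    have key : ∀ k : Fin 2 → ℝ,
        (Q k 0 0 + Q k 1 1 = gA.eval (sq2 k)) ∧
        (Q k 0 1 - Q k 1 0 = gB.eval (sq2 k)) ∧
        (Q k 0 0 - Q k 1 1
          = (k 0 ^ 2 - k 1 ^ 2) * zt.eval (sq2 k) - 2 * (k 0) * (k 1) * wt.eval (sq2 k)) ∧
        (Q k 0 1 + Q k 1 0
          = 2 * (k 0) * (k 1) * zt.eval (sq2 k) + (k 0 ^ 2 - k 1 ^ 2) * wt.eval (sq2 k)) := by
      intro k
      by_cases hs0 : sq2 k = 0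
      · have hs0' : k 0 ^ 2 + k 1 ^ 2 = 0 := hs0
        have hk0 : k 0 = 0 ∧ k 1 = 0 := by
          constructor <;> nlinarith [sq_nonneg (k 0), sq_nonneg (k 1)]
        have hkv : k = ![0, 0] := by
          funext a; fin_cases a <;> simp [hk0.1, hk0.2]
        have e00 := hφeval 0 0 0
        have e01 := hφeval 0 1 0
        have e10 := hφeval 1 0 0
        have e11 := hφeval 1 1 0
        have hA0 := hgA 0
        have hB0 := hgB 0
        simp only [eval_add, eval_sub] at hA0 hB0
        rw [hkv, show sq2 ![0, 0] = (0:ℝ) by norm_num [sq2]]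
        norm_num at hA0 hB0 ⊢
        refine ⟨?_, ?_, ?_, ?_⟩
        · rw [← e00, ← e11]; rw [← hA0]
        · rw [← e01, ← e10]; rw [← hB0]
        · rw [hpi2.1]; ring
        · rw [hpi2.2]; ring
      · -- nonzero case
        set s := sq2 k with hsdef
        have hspos : 0 < s := by
          rcases lt_or_eq_of_le (show 0 ≤ s by rw [hsdef]; unfold sq2; positivity) with h | h
          · exact h
          · exact absurd h.symm hs0
        set r := Real.sqrt s with hrdef
        have hr2 : r ^ 2 = s := Real.sq_sqrt hspos.le
        have hrne : r ≠ 0 := by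
          intro h; rw [h] at hr2; simp at hr2; exact hs0 hr2.symm
        set c := k 0 / r with hcdef
        set t := k 1 / r with htdef
        have hct : c ^ 2 + t ^ 2 = 1 := by
          rw [hcdef, htdef, div_pow, div_pow, ← add_div, hr2]
          exact div_self hs0
        set R : Matrix (Fin 2) (Fin 2) ℝ := !![c, -t; t, c] with hRdef
        have hRT : Rᵀ = !![c, t; -t, c] := by
          rw [hRdef]; exact (Matrix.transposeᵣ_eq _).symm
        have h1 : Rᵀ * R = 1 := by
          rw [hRT, hRdef]
          ext i j
          fin_cases i <;> fin_cases j <;>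
            simp [Matrix.mul_apply, Fin.sum_univ_two, Matrix.one_apply] <;>
            first
            | linear_combination hct
            | ring
        have h2 : R.det = 1 := by
          rw [hRdef]
          rw [Matrix.det_fin_two_of]
          linear_combination hct
        have hmv : R.mulVec ![r, 0] = k := by
          funext a
          fin_cases a <;>
            simp [hRdef, Matrix.mulVec, dotProduct, Fin.sum_univ_two, hcdef, htdef] <;>
            field_simp
        have hE := hequiv R h1 h2 ![r, 0]
        rw [hmv, hRT] at hE
        rw [hRdef] at hE
        have h00 := congrFun (congrFun hE 0) 0
        have h01 := congrFun (congrFun hE 0) 1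
        have h10 := congrFun (congrFun hE 1) 0
        have h11 := congrFun (congrFun hE 1) 1
        simp only [Matrix.mul_apply, Matrix.vecMul, dotProduct, Fin.sum_univ_two,
          Matrix.cons_val_zero, Matrix.cons_val_one, Matrix.head_cons, Matrix.head_fin_const,
          Matrix.cons_val', Matrix.empty_val', Matrix.cons_val_fin_one,
          Matrix.of_apply, Matrix.cons_val'] at h00 h01 h10 h11
        rw [← hφeval 0 0 r, ← hφeval 0 1 r, ← hφeval 1 0 r, ← hφeval 1 1 r] at h00 h01 h10 h11
        have hAr : (φ 0 0).eval r + (φ 1 1).eval r = gA.eval s := by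
          have := hgA r; rw [hr2] at this; simpa using this
        have hBr : (φ 0 1).eval r - (φ 1 0).eval r = gB.eval s := by
          have := hgB r; rw [hr2] at this; simpa using this
        have hCr : (φ 0 0).eval r - (φ 1 1).eval r = s * zt.eval s := by
          have h3 := hgC r; rw [hr2] at h3
          have h4 : gC.eval s = s * zt.eval s := by
            rw [← hXz]; simp
          rw [← h4]; simpa using h3
        have hDr : (φ 0 1).eval r + (φ 1 0).eval r = s * wt.eval s := by
          have h3 := hgD r; rw [hr2] at h3
          have h4 : gD.eval s = s * wt.eval s := by
            rw [← hXw]; simp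
          rw [← h4]; simpa using h3
        rw [hcdef, htdef] at h00 h01 h10 h11
        field_simp at h00 h01 h10 h11
        have hs' : k 0 ^ 2 + k 1 ^ 2 = s := hsdef.symm
        refine ⟨?_, ?_, ?_, ?_⟩
        · apply mul_left_cancel₀ (pow_ne_zero 2 hrne)
          linear_combination h00 + h11
            + (Polynomial.eval r (φ 0 0) + Polynomial.eval r (φ 1 1)) * hs'
            + s * hAr - Polynomial.eval s gA * hr2
        · apply mul_left_cancel₀ (pow_ne_zero 2 hrne)
          linear_combination h01 - h10
            + (Polynomial.eval r (φ 0 1) - Polynomial.eval r (φ 1 0)) * hs'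
            + s * hBr - Polynomial.eval s gB * hr2
        · apply mul_left_cancel₀ (pow_ne_zero 2 hrne)
          linear_combination h00 - h11
            + (k 0 ^ 2 - k 1 ^ 2) * hCr - 2 * k 0 * k 1 * hDr
            - ((k 0 ^ 2 - k 1 ^ 2) * Polynomial.eval s zt
              - 2 * k 0 * k 1 * Polynomial.eval s wt) * hr2
        · apply mul_left_cancel₀ (pow_ne_zero 2 hrne)
          linear_combination h01 + h10
            + 2 * k 0 * k 1 * hCr + (k 0 ^ 2 - k 1 ^ 2) * hDr
            - (2 * k 0 * k 1 * Polynomial.eval s zt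
              + (k 0 ^ 2 - k 1 ^ 2) * Polynomial.eval s wt) * hr2
    -- final assembly
    refine ⟨Polynomial.C (1/2) * (gA - Polynomial.X * zt), zt,
      Polynomial.C (1/2) * (gB - Polynomial.X * wt), -wt, ?_⟩
    intro k i j
    obtain ⟨K1, K2, K3, K4⟩ := key k
    have hsq : sq2 k = k 0 ^ 2 + k 1 ^ 2 := rfl
    fin_cases i <;> fin_cases j <;>
      simp only [Matrix.one_apply, J0mat, perp2, Matrix.cons_val_zero, Matrix.cons_val_one,
        Matrix.head_cons, Matrix.of_apply, Matrix.cons_val', Matrix.empty_val',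
        Matrix.cons_val_fin_one, Matrix.head_fin_const,
        Polynomial.eval_mul, Polynomial.eval_C, Polynomial.eval_sub, Polynomial.eval_add,
        Polynomial.eval_neg, Polynomial.eval_X, Fin.isValue, if_true, if_false,
        Fin.zero_eta, Fin.mk_one, one_ne_zero, zero_ne_one, ite_true, ite_false,
        mul_zero, mul_one, mul_neg, add_zero, zero_add, neg_zero]
    · linear_combination (K1 + K3) / 2 + (Polynomial.eval (sq2 k) zt / 2) * hsq
    · linear_combination (K2 + K4) / 2 + (Polynomial.eval (sq2 k) wt / 2) * hsq
    · linear_combination (K4 - K2) / 2 - (Polynomial.eval (sq2 k) wt / 2) * hsq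
    · linear_combination (K1 - K3) / 2 + (Polynomial.eval (sq2 k) zt / 2) * hsq
  · rintro ⟨m, z, n, h, hf⟩
    intro R hR hd k
    obtain ⟨h11, h10, hab⟩ := rot_structure R hR hd
    set a := R 0 0 with ha; set b := R 0 1 with hb
    have hs : sq2 (R.mulVec k) = sq2 k := by
      simp [sq2, Matrix.mulVec, dotProduct, Fin.sum_univ_two, h11, h10, ← ha, ← hb]
      ring_nf
      linear_combination (k 0 ^2 + k 1^2) * hab
    funext i j
    rw [hf (R.mulVec k) i j, hs]
    rw [Matrix.mul_apply]
    simp only [Matrix.mul_apply, Fin.sum_univ_two, Matrix.transpose_apply]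
    simp only [hf k, Matrix.mulVec, dotProduct, Fin.sum_univ_two]
    fin_cases i <;> fin_cases j <;>
      simp [Fin.isValue, h11, h10, ← ha, ← hb, perp2, J0mat, Matrix.one_apply,
        Matrix.mulVec, dotProduct, Fin.sum_univ_two]
    · linear_combination (-(Polynomial.eval (sq2 k) m)) * hab
    · linear_combination (-(Polynomial.eval (sq2 k) n)) * hab
    · linear_combination (Polynomial.eval (sq2 k) n) * hab
    · linear_combination (-(Polynomial.eval (sq2 k) m)) * hab
end

section
/- If the sequences (α_ℓ)_{ℓ≥1} and (β_m)_{m≥0} with β₀ = E satisfy the consistency identities X(t) = 𝔸(t) + 𝔅(t)·𝔹(t) and 𝔹(t)·X(t) = ℂ(t) + 𝔻(t)·𝔹(t), then: α₃ = A₃ + B₁·β₂ + B₂·β₁ + B₃·E − (1/2)·(α₁α₂ + α₂α₁) − (1/6)·α₁³; β₃ = S⁻¹·( C₃ + D₁·β₂ + D₂·β₁ + D₃·E − (E·α₃ + β₁·α₂ + β₂·α₁) − (1/2)·(E·(α₁α₂ + α₂α₁) + β₁·α₁²) − (1/6)·E·α₁³ ); and α₄ = A₄ + B₁·β₃ + B₂·β₂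 + B₃·β₁ + B₄·E − (1/2)·(α₁α₃ + α₂² + α₃α₁) − (1/6)·(α₁²α₂ + α₁α₂α₁ + α₂α₁²) − (1/24)·α₁⁴. -/
/-- `seriesPow a j p` is the coefficient of `t^p` in `F(t)^j`,
where `F(t) = Σ_{ℓ≥0} t^ℓ a_ℓ` (in the application `a 0 = 0`, so that
`F(t) = Σ_{ℓ≥1} t^ℓ a_ℓ`). -/
def seriesPow {A : Type*} [Ring A] (a : ℕ → A) : ℕ → ℕ → A
  | 0, p => if p = 0 then 1 else 0
  | j + 1, p => ∑ ij ∈ Finset.HasAntidiagonal.antidiagonal p, a ij.1 * seriesPow a j ij.2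

/-- `Xcoef α p` is the coefficient of `t^p` in `X(t) = Σ_{j≥0} (1/j!) F(t)^j`,
where `F(t) = Σ_{ℓ≥1} t^ℓ α_ℓ` (encoded by `α 0 = 0`, so that the coefficient of
`t^p` in `F(t)^j` vanishes for `j > p`). -/
def Xcoef {n : Type*} [Fintype n] [DecidableEq n] {R : Type*} [CommRing R] [Algebra ℚ R]
    (α : ℕ → Matrix n n R) (p : ℕ) : Matrix n n R :=
  ∑ j ∈ Finset.range (p + 1), ((j.factorial : ℚ)⁻¹) • seriesPow α j p

section Aux

set_option maxHeartbeats 2000000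

variable {n : Type*} [Fintype n] [DecidableEq n] {R : Type*} [CommRing R] [Algebra ℚ R]

lemma Xcoef_zero (α : ℕ → Matrix n n R) : Xcoef α 0 = 1 := by
  simp [Xcoef, seriesPow]

lemma Xcoef_one (α : ℕ → Matrix n n R) (hα0 : α 0 = 0) : Xcoef α 1 = α 1 := by
  simp [Xcoef, seriesPow, Finset.Nat.sum_antidiagonal_eq_sum_range_succ_mk,
    Finset.sum_range_succ, hα0, Nat.factorial]

lemma Xcoef_two (α : ℕ → Matrix n n R) (hα0 : α 0 = 0) :
    Xcoef α 2 = α 2 + (2:ℚ)⁻¹ • (α 1 * α 1) := by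
  simp [Xcoef, seriesPow, Finset.Nat.sum_antidiagonal_eq_sum_range_succ_mk,
    Finset.sum_range_succ, hα0, Nat.factorial, mul_assoc, mul_add]

lemma Xcoef_three (α : ℕ → Matrix n n R) (hα0 : α 0 = 0) :
    Xcoef α 3 = α 3 + (2:ℚ)⁻¹ • (α 1 * α 2 + α 2 * α 1) + (6:ℚ)⁻¹ • (α 1 * α 1 * α 1) := by
  simp [Xcoef, seriesPow, Finset.Nat.sum_antidiagonal_eq_sum_range_succ_mk,
    Finset.sum_range_succ, hα0, Nat.factorial, mul_assoc, mul_add]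
  try module

lemma Xcoef_four (α : ℕ → Matrix n n R) (hα0 : α 0 = 0) :
    Xcoef α 4 = α 4 + (2:ℚ)⁻¹ • (α 1 * α 3 + α 2 * α 2 + α 3 * α 1)
      + (6:ℚ)⁻¹ • (α 1 * α 1 * α 2 + α 1 * α 2 * α 1 + α 2 * α 1 * α 1)
      + (24:ℚ)⁻¹ • (α 1 * α 1 * α 1 * α 1) := by
  simp [Xcoef, seriesPow, Finset.Nat.sum_antidiagonal_eq_sum_range_succ_mk,
    Finset.sum_range_succ, hα0, Nat.factorial, mul_assoc, mul_add]
  try module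

end Aux

set_option maxHeartbeats 2000000 in
/-- if `(α_ℓ)_{ℓ≥1}`, `(β_m)_{m≥0}` with `β₀ = E` satisfy
`X(t) = 𝔸(t) + 𝔅(t)𝔹(t)` and `𝔹(t)X(t) = ℂ(t) + 𝔻(t)𝔹(t)`, then `α₃`, `β₃`
and `α₄` are given by the explicit third- and fourth-order formulas. -/
theorem taylor_expansion_third_fourth_order (N q : ℕ) (hN : 1 ≤ N) (hq : N < q)
    (R : Type*) [CommRing R] [Algebra ℚ R]
    (A : ℕ → Matrix (Fin N) (Fin N) R) (B : ℕ → Matrix (Fin N) (Fin (q - N)) R)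
    (C : ℕ → Matrix (Fin (q - N)) (Fin N) R) (D : ℕ → Matrix (Fin (q - N)) (Fin (q - N)) R)
    (E : Matrix (Fin (q - N)) (Fin N) R) (S : Matrix (Fin (q - N)) (Fin (q - N)) R)
    (hSdiag : S.IsDiag) (hSunit : ∀ i, IsUnit (S i i))
    (hA0 : A 0 = 1) (hB0 : B 0 = 0) (hC0 : C 0 = S * E) (hD0 : D 0 = 1 - S)
    (α : ℕ → Matrix (Fin N) (Fin N) R) (β : ℕ → Matrix (Fin (q - N)) (Fin N) R)
    (hα0 : α 0 = 0) (hβ0 : β 0 = E)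
    (hid1 : ∀ p : ℕ, Xcoef α p = A p + ∑ ij ∈ Finset.HasAntidiagonal.antidiagonal p, B ij.1 * β ij.2)
    (hid2 : ∀ p : ℕ, ∑ ij ∈ Finset.HasAntidiagonal.antidiagonal p, β ij.1 * Xcoef α ij.2
        = C p + ∑ ij ∈ Finset.HasAntidiagonal.antidiagonal p, D ij.1 * β ij.2) :
    α 3 = A 3 + B 1 * β 2 + B 2 * β 1 + B 3 * E
        - ((2 : ℚ)⁻¹) • (α 1 * α 2 + α 2 * α 1)
        - ((6 : ℚ)⁻¹) • (α 1 * α 1 * α 1)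
    ∧ β 3 = S⁻¹ * (C 3 + D 1 * β 2 + D 2 * β 1 + D 3 * E
        - (E * α 3 + β 1 * α 2 + β 2 * α 1)
        - ((2 : ℚ)⁻¹) • (E * (α 1 * α 2 + α 2 * α 1) + β 1 * (α 1 * α 1))
        - ((6 : ℚ)⁻¹) • (E * (α 1 * α 1 * α 1)))
    ∧ α 4 = A 4 + B 1 * β 3 + B 2 * β 2 + B 3 * β 1 + B 4 * E
        - ((2 : ℚ)⁻¹) • (α 1 * α 3 + α 2 * α 2 + α 3 * α 1)
        - ((6 : ℚ)⁻¹) • (α 1 * α 1 * α 2 + α 1 * α 2 * α 1 + α 2 * α 1 * α 1)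
        - ((24 : ℚ)⁻¹) • (α 1 * α 1 * α 1 * α 1) := by
  have hdet : IsUnit S.det := by
    rw [← hSdiag.diagonal_diag, Matrix.det_diagonal]
    exact Finset.prod_induction _ IsUnit (fun a b => IsUnit.mul) isUnit_one
      (fun i _ => hSunit i)
  refine ⟨?_, ?_, ?_⟩
  · have h1 := hid1 3
    rw [Xcoef_three α hα0] at h1
    simp only [Finset.Nat.sum_antidiagonal_eq_sum_range_succ_mk, Finset.sum_range_succ,
      Nat.sub_zero, Nat.sub_self, hB0, hβ0, zero_mul, zero_add] at h1
    norm_num at h1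
    simp only [mul_assoc] at h1 ⊢
    linear_combination (norm := module) h1
  · have h3 := hid2 3
    simp only [Finset.Nat.sum_antidiagonal_eq_sum_range_succ_mk, Finset.sum_range_succ,
      Nat.sub_zero, Nat.sub_self] at h3
    norm_num at h3
    rw [Xcoef_zero α, Xcoef_one α hα0, Xcoef_two α hα0, Xcoef_three α hα0, hβ0, hD0] at h3
    simp only [Matrix.mul_add, Matrix.mul_one, Matrix.mul_smul, Matrix.sub_mul, Matrix.one_mul, Matrix.mul_assoc, mul_add, mul_one, mul_assoc] at h3
    have hbig : C 3 + D 1 * β 2 + D 2 * β 1 + D 3 * E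
        - (E * α 3 + β 1 * α 2 + β 2 * α 1)
        - ((2 : ℚ)⁻¹) • (E * (α 1 * α 2 + α 2 * α 1) + β 1 * (α 1 * α 1))
        - ((6 : ℚ)⁻¹) • (E * (α 1 * α 1 * α 1)) = S * β 3 := by
      simp only [Matrix.mul_add, Matrix.mul_assoc, mul_add, mul_assoc]
      linear_combination (norm := module) -h3
    rw [hbig, ← Matrix.mul_assoc, Matrix.nonsing_inv_mul S hdet, Matrix.one_mul]
  · have h2 := hid1 4
    rw [Xcoef_four α hα0] at h2
    simp only [Finset.Nat.sum_antidiagonal_eq_sum_range_succ_mk, Finset.sum_range_succ,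
      Nat.sub_zero, Nat.sub_self, hB0, hβ0, zero_mul, zero_add] at h2
    norm_num at h2
    simp only [mul_assoc] at h2 ⊢
    linear_combination (norm := module) h2
end
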